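/- The classes of generalized fighting fish and of fighting fish are closed under word duality: if F is a generalized fighting fish (respectively, a fighting fish), then the dual word of F is again a generalized fighting fish (respectively, a fighting fish). -/
import Mathlib


/-- The four-letter alphabet of steps. -/
inductive Letter : Type
  | E | N | W | S
deriving DecidableEq, Repr

open Letter

/-- Fighting fish: words obtainable from `ENWS` by upper, lower and double gluings. -/
inductive IsFF : List Letter → Prop
  | base : IsFF [E, N, W, S]
  | upper (u v : List Letter) :
      IsFF (u ++ [W] ++ v) → IsFF (u ++ [N, W, S] ++ v)
  | lower (u v : List Letter) :
      IsFF (u ++ [N] ++ v) → IsFF (u ++ [E, N, W] ++ v)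
  | double (u v : List Letter) :
      IsFF (u ++ [W, N] ++ v) → IsFF (u ++ [N, W] ++ v)

/-- Generalized fighting fish: words obtainable from the empty word by the
operations `∇_k` (replace `N^k` by `E N^k W`) and `△_k` (replace `W^k` by `N W^k S`),
for `k ≥ 0`. -/
inductive IsGFF : List Letter → Prop
  | base : IsGFF []
  | nabla (u v : List Letter) (k : ℕ) :
      IsGFF (u ++ List.replicate k N ++ v) →
      IsGFF (u ++ [E] ++ List.replicate k N ++ [W] ++ v)
  | delta (u v : List Letter) (k : ℕ) :
      IsGFF (u ++ List.replicate k W ++ v) →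
      IsGFF (u ++ [N] ++ List.replicate k W ++ [S] ++ v)

/-- The latitude of a word: number of `N`'s minus number of `S`'s. -/
def lat (w : List Letter) : ℤ := (w.count N : ℤ) - (w.count S : ℤ)

/-- The longitude of a word: number of `E`'s minus number of `W`'s. -/
def long (w : List Letter) : ℤ := (w.count E : ℤ) - (w.count W : ℤ)

/-- The size of a word: half its length. -/
def size (w : List Letter) : ℕ := w.length / 2

/-- The dual of a letter: `E ↦ S`, `N ↦ W`, `W ↦ N`, `S ↦ E`. -/
def dualLetter : Letter → Letter
  | E => S
  | N => W
  | W => N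
  | S => E

/-- The dual of a word: reverse it and dualize each letter. -/
def dual (w : List Letter) : List Letter := w.reverse.map dualLetter


lemma dual_append (a b : List Letter) : dual (a ++ b) = dual b ++ dual a := by
  simp [dual]

lemma dual_rep_N (k : ℕ) : dual (List.replicate k N) = List.replicate k W := by
  simp [dual, dualLetter]

lemma dual_rep_W (k : ℕ) : dual (List.replicate k W) = List.replicate k N := by
  simp [dual, dualLetter]

/-- The classes of generalized fighting fish and of fighting fish are closed under
word duality. -/
theorem dual_closure :
    (∀ w : List Letter, IsGFF w → IsGFF (dual w)) ∧
    (∀ w : List Letter, IsFF w → IsFF (dual w)) := by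
  constructor
  · intro w h
    induction h with
    | base => simpa [dual] using IsGFF.base
    | nabla u v k _ ih =>
        have h2 := IsGFF.delta (dual v) (dual u) k
          (by simpa [dual_append, dual_rep_N, List.append_assoc] using ih)
        simpa [dual_append, dual_rep_N, dual, dualLetter, List.append_assoc] using h2
    | delta u v k _ ih =>
        have h2 := IsGFF.nabla (dual v) (dual u) k
          (by simpa [dual_append, dual_rep_W, List.append_assoc] using ih)
        simpa [dual_append, dual_rep_W, dual, dualLetter, List.append_assoc] using h2
  · intro w h
    induction h with
    | base => simpa [dual, dualLetter] using IsFF.base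
    | upper u v _ ih =>
        have h2 := IsFF.lower (dual v) (dual u)
          (by simpa [dual_append, dual, dualLetter, List.append_assoc] using ih)
        simpa [dual_append, dual, dualLetter, List.append_assoc] using h2
    | lower u v _ ih =>
        have h2 := IsFF.upper (dual v) (dual u)
          (by simpa [dual_append, dual, dualLetter, List.append_assoc] using ih)
        simpa [dual_append, dual, dualLetter, List.append_assoc] using h2
    | double u v _ ih =>
        have h2 := IsFF.double (dual v) (dual u)
          (by simpa [dual_append, dual, dualLetter, List.append_assoc] using ih)
        simpa [dual_append, dual, dualLetter, List.append_assoc] using h2
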